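/- Let E be a category with finite limits, let i : D ⥤ E be a fully faithful functor admitting a left adjoint a : E ⥤ D (so D is a reflective subcategory of E), and suppose the reflector a preserves finite limits. Write L = i ∘ a and η : 𝟭_E ⟶ L for the unit of the adjunction. Then the pair (𝐋, 𝐑), where 𝐋 is the class of morphisms f of E such that L(f) is an isomorphism, and 𝐑 is the class of morphisms f : X ⟶ Y such that the unit naturality square with sides η_X : X ⟶ L X, η_Y : Y ⟶ L Y, f, and L(f) is a pullback square, is a stable orthogonal factorization system on E. -/

import Mathlib

open CategoryTheory CategoryTheory.Limits

universe v u

/-- A morphism `l` is uniquely left orthogonal to a morphism `r`. -/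
def UniqueLift {C : Type*} [Category C] {A B X Y : C} (l : A ⟶ B) (r : X ⟶ Y) : Prop :=
  ∀ (u : A ⟶ X) (v : B ⟶ Y), u ≫ r = l ≫ v → ∃! d : B ⟶ X, l ≫ d = u ∧ d ≫ r = v

variable (E : Type u) [Category.{v} E] [HasPullbacks E]

/-- A reflective subfibration on a category `E` with pullbacks: a pullback-stable
assignment of a reflective (full) subcategory `D X ⊆ Over X` for every `X : E`,
with reflector `Lf X` (the composite of the localization onto `D X` and the
inclusion) and unit `η X`, such that pullback functors preserve the subcategories
and the canonical comparison map `L_X (f* p) ⟶ f* (L_Y p)` is an isomorphism;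
the latter is expressed by requiring that the pullback of a unit map is an
`L_X`-equivalence, which is equivalent to invertibility of the comparison map. -/
structure ReflectiveSubfibration where
  /-- membership in the reflective subcategory `D X ⊆ Over X` -/
  loc : ∀ {X : E}, Over X → Prop
  /-- the localization functor `L_X : Over X ⥤ Over X` -/
  Lf : ∀ X : E, Over X ⥤ Over X
  /-- the unit of the localization -/
  η : ∀ X : E, 𝟭 (Over X) ⟶ Lf X
  loc_obj : ∀ (X : E) (p : Over X), loc ((Lf X).obj p)
  reflect : ∀ (X : E) (p d : Over X), loc d → ∀ g : p ⟶ d,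
      ∃! h : (Lf X).obj p ⟶ d, (η X).app p ≫ h = g
  loc_pullback : ∀ {X Y : E} (f : X ⟶ Y) (p : Over Y),
      loc p → loc ((Over.pullback f).obj p)
  comparison_isIso : ∀ {X Y : E} (f : X ⟶ Y) (p : Over Y),
      IsIso ((Lf X).map ((Over.pullback f).map ((η Y).app p)))

variable {E}

namespace ReflectiveSubfibration

variable (rsf : ReflectiveSubfibration E)

/-- A morphism `p : A ⟶ X` of `E` is `L`-local if it lies in `D X` as an object of `Over X`. -/
def LocalMap {A X : E} (p : A ⟶ X) : Prop := rsf.loc (Over.mk p)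

/-- A morphism of `Over X` is an `L_X`-equivalence if `L_X` inverts it. -/
def Lequiv {X : E} {p q : Over X} (α : p ⟶ q) : Prop := IsIso ((rsf.Lf X).map α)

/-- A morphism `f : A ⟶ X` is `L`-connected if `L_X f` is a terminal object of `Over X`,
i.e. its structure morphism to `X` is an isomorphism. -/
def Connected {A X : E} (f : A ⟶ X) : Prop := IsIso ((rsf.Lf X).obj (Over.mk f)).hom

/-- A morphism is `L`-separated if its diagonal is `L`-local. -/
def Separated {A X : E} (p : A ⟶ X) : Prop := rsf.LocalMap (pullback.diagonal p)

end ReflectiveSubfibration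

/-- A stable orthogonal factorization system `(Lc, Rc)` on a category: both classes
contain all isomorphisms and are closed under composition, every morphism factors as
a morphism in `Lc` followed by one in `Rc`, every morphism in `Lc` is uniquely left
orthogonal to every morphism in `Rc`, and `Lc` is stable under pullback along
arbitrary morphisms. -/
structure IsStableOFS {C : Type*} [Category C] (Lc Rc : MorphismProperty C) : Prop where
  left_iso : ∀ {A B : C} (f : A ⟶ B), IsIso f → Lc f
  right_iso : ∀ {A B : C} (f : A ⟶ B), IsIso f → Rc f
  left_comp : ∀ {A B D : C} (f : A ⟶ B) (g : B ⟶ D), Lc f → Lc g → Lc (f ≫ g)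
  right_comp : ∀ {A B D : C} (f : A ⟶ B) (g : B ⟶ D), Rc f → Rc g → Rc (f ≫ g)
  factor : ∀ {A B : C} (f : A ⟶ B), ∃ (D : C) (l : A ⟶ D) (r : D ⟶ B), Lc l ∧ Rc r ∧ l ≫ r = f
  orth : ∀ {A B X Y : C} (l : A ⟶ B) (r : X ⟶ Y), Lc l → Rc r → UniqueLift l r
  left_stable : ∀ {P A B D : C} (fst : P ⟶ A) (snd : P ⟶ B) (f : A ⟶ D) (g : B ⟶ D),
      IsPullback fst snd f g → Lc g → Lc fst

universe v₂ u₂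


lemma aux_isIso_fst_of_isPullback {C : Type*} [Category C] {P X Y Z : C} {fst : P ⟶ X}
    {snd : P ⟶ Y} {f : X ⟶ Z} {g : Y ⟶ Z} (h : IsPullback fst snd f g) (hg : IsIso g) :
    IsIso fst := by
  refine ⟨h.lift (𝟙 X) (f ≫ inv g) (by simp), ?_, by simp⟩
  apply h.hom_ext
  · simp
  · rw [Category.assoc, h.lift_snd, ← Category.assoc, h.w, Category.assoc,
      IsIso.hom_inv_id, Category.comp_id, Category.id_comp]

/-- For a left exact reflective localization `L = i ∘ a` of a finitely complete
category, the `L`-equivalences and the morphisms whose unit naturality square is a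
pullback form a stable orthogonal factorization system. -/
theorem stableOFS_of_leftExactLocalization {C : Type u} [Category.{v} C] [HasFiniteLimits C]
    {D : Type u₂} [Category.{v₂} D]
    (i : D ⥤ C) [i.Full] [i.Faithful]
    (a : C ⥤ D) (adj : a ⊣ i) [PreservesFiniteLimits a] :
    IsStableOFS
      (fun _ _ f => IsIso ((a ⋙ i).map f))
      (fun X Y f => IsPullback (adj.unit.app X) f ((a ⋙ i).map f) (adj.unit.app Y)) := by
  haveI : PreservesLimitsOfSize.{0, 0} i := adj.rightAdjoint_preservesLimits
  haveI : PreservesFiniteLimits i := inferInstance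
  haveI : PreservesFiniteLimits (a ⋙ i) := comp_preservesFiniteLimits a i
  set L := a ⋙ i with hL
  -- naturality of the unit
  have natsq : ∀ {X Y : C} (f : X ⟶ Y),
      adj.unit.app X ≫ L.map f = f ≫ adj.unit.app Y := fun f =>
    (adj.unit.naturality f).symm
  -- `L η = η L`
  have hLη_eq : ∀ X : C, L.map (adj.unit.app X) = adj.unit.app (L.obj X) := by
    intro X
    haveI : IsIso (i.map (adj.counit.app (a.obj X))) := inferInstance
    have h1 : i.map (a.map (adj.unit.app X)) ≫ i.map (adj.counit.app (a.obj X)) =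
        𝟙 (i.obj (a.obj X)) := by
      rw [← i.map_comp]; erw [adj.left_triangle_components]; simp
    have h2 : adj.unit.app (i.obj (a.obj X)) ≫ i.map (adj.counit.app (a.obj X)) =
        𝟙 (i.obj (a.obj X)) :=
      adj.right_triangle_components (a.obj X)
    exact (cancel_mono (i.map (adj.counit.app (a.obj X)))).1 (h1.trans h2.symm)
  have hηL : ∀ X : C, IsIso (adj.unit.app (L.obj X)) := by
    intro X
    haveI : IsIso (i.map (adj.counit.app (a.obj X))) := inferInstance
    have : IsIso (adj.unit.app (i.obj (a.obj X))) :=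
      isIso_of_comp_hom_eq_id (i.map (adj.counit.app (a.obj X)))
        (adj.right_triangle_components (a.obj X))
    exact this
  have hLη : ∀ X : C, IsIso (L.map (adj.unit.app X)) := by
    intro X; rw [hLη_eq]; exact hηL X
  constructor
  · intro A B f hf
    haveI := hf
    exact inferInstance
  · intro A B f hf
    haveI := hf
    haveI : IsIso (L.map f) := inferInstance
    exact IsPullback.of_vert_isIso ⟨natsq f⟩
  · intro A B Z f g hf hg
    haveI := hf; haveI := hg
    rw [L.map_comp]
    exact inferInstance
  · intro A B Z f g hf hg
    have := hf.paste_vert hg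
    rwa [← L.map_comp] at this
  · -- factorization
    intro A B f
    let Z := pullback (L.map f) (adj.unit.app B)
    have hZ : IsPullback (pullback.fst (L.map f) (adj.unit.app B))
        (pullback.snd (L.map f) (adj.unit.app B)) (L.map f) (adj.unit.app B) :=
      IsPullback.of_hasPullback _ _
    let l : A ⟶ Z := pullback.lift (adj.unit.app A) f (natsq f)
    have hlfst : l ≫ pullback.fst (L.map f) (adj.unit.app B) = adj.unit.app A :=
      pullback.lift_fst _ _ _
    have hlsnd : l ≫ pullback.snd (L.map f) (adj.unit.app B) = f :=
      pullback.lift_snd _ _ _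
    -- `L` applied to the pullback square
    have LhZ := hZ.map L
    haveI : IsIso (L.map (adj.unit.app B)) := hLη B
    haveI hfst : IsIso (L.map (pullback.fst (L.map f) (adj.unit.app B))) :=
      aux_isIso_fst_of_isPullback LhZ inferInstance
    haveI : IsIso (adj.unit.app (L.obj A)) := hηL A
    have hLl : IsIso (L.map l) := by
      have h1 : L.map l ≫ L.map (pullback.fst (L.map f) (adj.unit.app B)) =
          L.map (adj.unit.app A) := by rw [← L.map_comp, hlfst]
      haveI : IsIso (L.map (adj.unit.app A)) := hLη A
      have : L.map l = L.map (adj.unit.app A) ≫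
          inv (L.map (pullback.fst (L.map f) (adj.unit.app B))) := by
        rw [IsIso.eq_comp_inv, h1]
      rw [this]; exact inferInstance
    -- the right square is a pullback
    set t : L.obj Z ⟶ L.obj A :=
      L.map (pullback.fst (L.map f) (adj.unit.app B)) ≫ inv (adj.unit.app (L.obj A)) with ht
    haveI : IsIso (adj.unit.app (L.obj B)) := hηL B
    have e1 : inv (adj.unit.app (L.obj A)) ≫ L.map f =
        L.map (L.map f) ≫ inv (adj.unit.app (L.obj B)) := by
      rw [IsIso.inv_comp_eq, ← Category.assoc, natsq (L.map f), Category.assoc,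
        IsIso.hom_inv_id, Category.comp_id]
    have htcomm : t ≫ L.map f = L.map (pullback.snd (L.map f) (adj.unit.app B)) := by
      rw [ht, Category.assoc, e1, ← Category.assoc, ← L.map_comp, hZ.w, L.map_comp,
        hLη_eq B, Category.assoc, IsIso.hom_inv_id, Category.comp_id]
    haveI : IsIso t := inferInstance
    haveI : IsIso (𝟙 (L.obj B)) := inferInstance
    have sqT : CommSq t (L.map (pullback.snd (L.map f) (adj.unit.app B)))
        (L.map f) (𝟙 (L.obj B)) := ⟨htcomm.trans (Category.comp_id _).symm⟩
    have T : IsPullback t (L.map (pullback.snd (L.map f) (adj.unit.app B)))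
        (L.map f) (𝟙 (L.obj B)) :=
      IsPullback.of_horiz_isIso sqT
    have hbig : IsPullback (adj.unit.app Z ≫ t)
        (pullback.snd (L.map f) (adj.unit.app B)) (L.map f)
        (adj.unit.app B ≫ 𝟙 (L.obj B)) := by
      have hηt : adj.unit.app Z ≫ t = pullback.fst (L.map f) (adj.unit.app B) := by
        rw [ht, ← Category.assoc, natsq, Category.assoc, IsIso.hom_inv_id,
          Category.comp_id]
      rw [hηt, Category.comp_id]
      exact hZ
    have hr : IsPullback (adj.unit.app Z)
        (pullback.snd (L.map f) (adj.unit.app B))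
        (L.map (pullback.snd (L.map f) (adj.unit.app B))) (adj.unit.app B) :=
      IsPullback.of_right hbig (natsq _) T
    exact ⟨Z, l, pullback.snd (L.map f) (adj.unit.app B), hLl, hr, hlsnd⟩
  · -- orthogonality
    intro A B X Y l r hl hr u v huv
    haveI : IsIso (L.map l) := hl
    set m : B ⟶ L.obj X := adj.unit.app B ≫ inv (L.map l) ≫ L.map u with hm
    have hmw : m ≫ L.map r = v ≫ adj.unit.app Y := by
      rw [hm, Category.assoc, Category.assoc, ← L.map_comp, huv, L.map_comp,
        IsIso.inv_hom_id_assoc, ← natsq]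
    have hlm : l ≫ m = u ≫ adj.unit.app X := by
      rw [hm, ← Category.assoc, ← natsq l, Category.assoc, IsIso.hom_inv_id_assoc, ← natsq u]
    refine ⟨hr.lift m v hmw, ⟨?_, hr.lift_snd m v hmw⟩, ?_⟩
    · apply hr.hom_ext
      · rw [Category.assoc, hr.lift_fst, hlm]
      · rw [Category.assoc, hr.lift_snd, huv]
    · rintro d' ⟨hd1, hd2⟩
      apply hr.hom_ext
      · rw [hr.lift_fst, ← natsq d']
        rw [hm]
        have : L.map d' = inv (L.map l) ≫ L.map u := by
          rw [IsIso.eq_inv_comp, ← L.map_comp, hd1]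
        rw [this]
      · rw [hr.lift_snd, hd2]
  · -- stability
    intro P A B Z fst snd f g hpb hg
    haveI : IsIso (L.map g) := hg
    exact aux_isIso_fst_of_isPullback (hpb.map L) inferInstance
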